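/- Let β > 1 be a real number and let Σ_β^n denote the set of admissible words of length n for the β-expansion (i.e., finite digit strings arising as initial digit blocks of β-expansions of points in [0,1)). Then for every n ≥ 1, β^n ≤ #Σ_β^n ≤ β^{n+1}/(β−1). -/

import Mathlib

open Filter Real MeasureTheory Set
open scoped ENNReal

/-- The β-transformation T_β(x) = βx - ⌊βx⌋. -/
noncomputable def bT (β x : ℝ) : ℝ := β * x - ⌊β * x⌋

/-- The k-th digit (0-based: `bDigit β x k = ε_{k+1}(x)`) of the β-expansion. -/
noncomputable def bDigit (β x : ℝ) (k : ℕ) : ℤ := ⌊β * ((bT β)^[k] x)⌋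

/-- The n-th convergent ω_n(x) = Σ_{k=1}^n ε_k(x)/β^k. -/
noncomputable def bConv (β x : ℝ) (n : ℕ) : ℝ :=
  ∑ k ∈ Finset.range n, (bDigit β x k : ℝ) / β ^ (k + 1)

/-- ℓ_n(x): length of the longest run of zero digits just after the n-th digit. -/
noncomputable def ellRun (β x : ℝ) (n : ℕ) : ℕ :=
  sSup {k : ℕ | ∀ j < k, bDigit β x (n + j) = 0}

/-- r_n(x): maximal length of a run of zeros within the first n digits. -/
noncomputable def runMax (β x : ℝ) (n : ℕ) : ℕ :=
  sSup {k : ℕ | ∃ i, i + k ≤ n ∧ ∀ j < k, bDigit β x (i + j) = 0}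


lemma bT_mem (β x : ℝ) : bT β x ∈ Set.Ico (0:ℝ) 1 := by
  have h : bT β x = Int.fract (β * x) := rfl
  rw [h]
  exact ⟨Int.fract_nonneg _, Int.fract_lt_one _⟩

lemma bT_iter_mem (β x : ℝ) (hx : x ∈ Set.Ico (0:ℝ) 1) (k : ℕ) :
    (bT β)^[k] x ∈ Set.Ico (0:ℝ) 1 := by
  cases k with
  | zero => exact hx
  | succ m => rw [Function.iterate_succ_apply']; exact bT_mem _ _

lemma bDigit_nonneg {β : ℝ} (hβ : 1 < β) (x : ℝ) (hx : x ∈ Set.Ico (0:ℝ) 1) (k : ℕ) :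
    0 ≤ bDigit β x k := by
  have h := bT_iter_mem β x hx k
  have : (0:ℝ) ≤ β * ((bT β)^[k] x) :=
    mul_nonneg (le_of_lt (lt_trans one_pos hβ)) h.1
  exact Int.floor_nonneg.2 this

lemma bDigit_succ (β x : ℝ) (k : ℕ) :
    bDigit β x (k + 1) = bDigit β (bT β x) k := by
  simp [bDigit, Function.iterate_succ_apply]

lemma bConv_eq {β : ℝ} (hβ : 1 < β) (x : ℝ) (n : ℕ) :
    bConv β x n = x - ((bT β)^[n] x) / β ^ n := by
  have hβ0 : (0:ℝ) < β := lt_trans one_pos hβ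
  induction n with
  | zero => simp [bConv]
  | succ m ih =>
      rw [bConv, Finset.sum_range_succ, ← bConv, ih]
      have hd : (bDigit β x m : ℝ) = β * ((bT β)^[m] x) - (bT β)^[m+1] x := by
        rw [Function.iterate_succ_apply', bT, bDigit]; ring
      rw [hd]
      field_simp
      ring

lemma bConv_succ (β x : ℝ) (n : ℕ) :
    bConv β x (n + 1) = (bDigit β x 0 : ℝ) / β + (bConv β (bT β x) n) / β := by
  rw [bConv, Finset.sum_range_succ']
  simp only [bDigit_succ]
  rw [add_comm, bConv, Finset.sum_div]
  congr 1
  · norm_num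
  · exact Finset.sum_congr rfl (fun k _ => by rw [div_div, ← pow_succ])

lemma realize {β : ℝ} (hβ : 1 < β) : ∀ (m : ℕ) (x : ℝ), x ∈ Set.Ico (0:ℝ) 1 →
    ∀ t : ℝ, 0 ≤ t → t ≤ (bT β)^[m] x →
    (bConv β x m + t / β ^ m ∈ Set.Ico (0:ℝ) 1) ∧
    (∀ k < m, bDigit β (bConv β x m + t / β ^ m) k = bDigit β x k) ∧
    (bT β)^[m] (bConv β x m + t / β ^ m) = t := by
  have hβ0 : (0:ℝ) < β := lt_trans one_pos hβ
  intro m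
  induction m with
  | zero =>
      intro x hx t ht0 ht
      have hx' : bConv β x 0 + t / β ^ 0 = t := by simp [bConv]
      rw [hx']
      exact ⟨⟨ht0, lt_of_le_of_lt ht hx.2⟩, fun k hk => absurd hk (Nat.not_lt_zero k), rfl⟩
  | succ m ih =>
      intro x hx t ht0 ht
      set y := bT β x with hy_def
      have hy : y ∈ Set.Ico (0:ℝ) 1 := bT_mem β x
      have htm : t ≤ (bT β)^[m] y := by
        rw [← Function.iterate_succ_apply]; exact ht
      obtain ⟨hy'mem, hy'dig, hy'iter⟩ := ih y hy t ht0 htm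
      set y' := bConv β y m + t / β ^ m with hy'_def
      set x' := bConv β x (m + 1) + t / β ^ (m + 1) with hx'_def
      have key : β * x' = (bDigit β x 0 : ℝ) + y' := by
        rw [hx'_def, bConv_succ, hy'_def]
        field_simp
        ring
      have hfloor : ⌊β * x'⌋ = bDigit β x 0 := by
        rw [key, add_comm, Int.floor_add_intCast]
        have : ⌊y'⌋ = 0 := Int.floor_eq_zero_iff.2 (by exact ⟨hy'mem.1, hy'mem.2⟩)
        omega
      have hTx' : bT β x' = y' := by
        rw [bT, hfloor, key]; ring
      have hiter : (bT β)^[m+1] x' = t := by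
        rw [Function.iterate_succ_apply, hTx', hy'iter]
      refine ⟨?_, ?_, hiter⟩
      · constructor
        · have : x' = ((bDigit β x 0 : ℝ) + y') / β := by
            field_simp [← key]
            linarith [key]
          rw [this]
          apply div_nonneg _ (le_of_lt hβ0)
          have h1 : (0:ℝ) ≤ (bDigit β x 0 : ℝ) := by
            exact_mod_cast bDigit_nonneg hβ x hx 0
          linarith [hy'mem.1]
        · have h1 : x' ≤ x := by
            have h2 := bConv_eq hβ x (m + 1)
            have h3 : (0:ℝ) < β ^ (m + 1) := pow_pos hβ0 _
            rw [hx'_def]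
            have h4 : t / β ^ (m+1) ≤ ((bT β)^[m+1] x) / β ^ (m+1) := by gcongr
            linarith [h4]
          exact lt_of_le_of_lt h1 hx.2
      · intro k hk
        cases k with
        | zero =>
            show ⌊β * ((bT β)^[0] x')⌋ = bDigit β x 0
            simpa using hfloor
        | succ j =>
            rw [bDigit_succ, hTx', hy'dig j (by omega), ← bDigit_succ]

def bWords (β : ℝ) (n : ℕ) : Set (Fin n → ℤ) :=
  {w : Fin n → ℤ | ∃ x ∈ Set.Ico (0:ℝ) 1, ∀ i : Fin n, bDigit β x i = w i}

lemma bDigit_lt_ceil {β : ℝ} (hβ : 1 < β) (x : ℝ) (hx : x ∈ Set.Ico (0:ℝ) 1) (k : ℕ) :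
    bDigit β x k < ⌈β⌉ := by
  have h := bT_iter_mem β x hx k
  have hβ0 : (0:ℝ) < β := lt_trans one_pos hβ
  have h1 : (bDigit β x k : ℝ) < (⌈β⌉ : ℝ) := by
    calc (bDigit β x k : ℝ) ≤ β * ((bT β)^[k] x) := Int.floor_le _
    _ < β * 1 := by
        rcases lt_or_eq_of_le h.1 with h' | h'
        · exact (mul_lt_mul_iff_right₀ hβ0).2 h.2
        · rw [← h']; simpa using hβ0
    _ = β := mul_one β
    _ ≤ (⌈β⌉ : ℝ) := Int.le_ceil β
  exact_mod_cast h1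

lemma bWords_finite {β : ℝ} (hβ : 1 < β) (n : ℕ) : (bWords β n).Finite := by
  apply Set.Finite.subset (Set.Finite.pi (fun _ : Fin n => Set.finite_Icc (0:ℤ) (⌈β⌉ - 1)))
  rintro w ⟨x, hx, hw⟩
  intro i _
  rw [← hw i]
  exact ⟨bDigit_nonneg hβ x hx i, by have := bDigit_lt_ceil hβ x hx i; omega⟩

noncomputable def vW (β : ℝ) {n : ℕ} (w : Fin n → ℤ) : ℝ :=
  ∑ i : Fin n, (w i : ℝ) / β ^ ((i : ℕ) + 1)

lemma vW_digits {β : ℝ} (x : ℝ) (n : ℕ) :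
    vW β (fun i : Fin n => bDigit β x i) = bConv β x n := by
  rw [vW, bConv, Fin.sum_univ_eq_sum_range (fun k => (bDigit β x k : ℝ) / β ^ (k + 1))]

lemma mem_own_cyl {β : ℝ} (hβ : 1 < β) (x : ℝ) (hx : x ∈ Set.Ico (0:ℝ) 1) (n : ℕ) :
    x ∈ Set.Ico (bConv β x n) (bConv β x n + (β ^ n)⁻¹) := by
  have hβn : (0:ℝ) < β ^ n := pow_pos (lt_trans one_pos hβ) n
  have h := bT_iter_mem β x hx n
  have he := bConv_eq hβ x n
  constructor
  · have : 0 ≤ ((bT β)^[n] x) / β ^ n := div_nonneg h.1 hβn.le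
    linarith
  · have : ((bT β)^[n] x) / β ^ n < 1 / β ^ n := by gcongr; exact h.2
    rw [one_div] at this
    linarith

lemma bWords_lower {β : ℝ} (hβ : 1 < β) (n : ℕ) :
    β ^ n ≤ (Nat.card (bWords β n) : ℝ) := by
  classical
  have hβ0 : (0:ℝ) < β := lt_trans one_pos hβ
  have hβn : (0:ℝ) < β ^ n := pow_pos hβ0 n
  set S := (bWords_finite hβ n).toFinset with hS
  have hcov : Set.Ico (0:ℝ) 1 ⊆ ⋃ w ∈ S, Set.Ico (vW β w) (vW β w + (β ^ n)⁻¹) := by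
    intro x hx
    simp only [Set.mem_iUnion]
    refine ⟨fun i : Fin n => bDigit β x i, ?_, ?_⟩
    · rw [hS, Set.Finite.mem_toFinset]
      exact ⟨x, hx, fun i => rfl⟩
    · rw [vW_digits]
      exact mem_own_cyl hβ x hx n
  have hmeas : (1 : ℝ≥0∞) ≤ S.card * ENNReal.ofReal ((β ^ n)⁻¹) := by
    calc (1 : ℝ≥0∞) = volume (Set.Ico (0:ℝ) 1) := by simp
    _ ≤ volume (⋃ w ∈ S, Set.Ico (vW β w) (vW β w + (β ^ n)⁻¹)) := measure_mono hcov
    _ ≤ ∑ w ∈ S, volume (Set.Ico (vW β w) (vW β w + (β ^ n)⁻¹)) := measure_biUnion_finset_le S _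
    _ = ∑ w ∈ S, ENNReal.ofReal ((β ^ n)⁻¹) := by
        refine Finset.sum_congr rfl (fun w _ => ?_)
        rw [Real.volume_Ico, add_sub_cancel_left]
    _ = S.card * ENNReal.ofReal ((β ^ n)⁻¹) := by
        rw [Finset.sum_const, nsmul_eq_mul]
  have hreal : (1 : ℝ) ≤ S.card * (β ^ n)⁻¹ := by
    have h2 : (S.card : ℝ≥0∞) * ENNReal.ofReal ((β ^ n)⁻¹)
        = ENNReal.ofReal (S.card * (β ^ n)⁻¹) := by
      rw [ENNReal.ofReal_mul (Nat.cast_nonneg _), ENNReal.ofReal_natCast]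
    exact ENNReal.one_le_ofReal.mp (h2 ▸ hmeas)
  have hcard : Nat.card (bWords β n) = S.card := by
    rw [Nat.card_coe_set_eq, Set.ncard_eq_toFinset_card _ (bWords_finite hβ n)]
  rw [hcard]
  have h4 := mul_le_mul_of_nonneg_left hreal hβn.le
  rw [mul_one] at h4
  calc β ^ n ≤ β ^ n * (S.card * (β ^ n)⁻¹) := h4
  _ = S.card := by field_simp

lemma bWords_step {β : ℝ} (hβ : 1 < β) (n : ℕ) :
    (Nat.card (bWords β (n+1)) : ℝ) ≤ β ^ (n+1) + (Nat.card (bWords β n) : ℝ) := by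
  classical
  have hβ0 : (0:ℝ) < β := lt_trans one_pos hβ
  have hβn1 : (0:ℝ) < β ^ (n+1) := pow_pos hβ0 _
  set S := (bWords_finite hβ (n+1)).toFinset with hS
  set Sn := (bWords_finite hβ n).toFinset with hSn
  set P : (Fin (n+1) → ℤ) → Prop := fun w =>
    ∃ x ∈ Set.Ico (0:ℝ) 1,
      (∀ k : Fin n, bDigit β x k = w k.castSucc) ∧
      ((w (Fin.last n) : ℝ) + 1) ≤ β * ((bT β)^[n] x) with hP
  -- auxiliary claim
  have aux : ∀ w1 ∈ bWords β (n+1), ∀ w2 ∈ bWords β (n+1),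
      (∀ k : Fin n, w1 k.castSucc = w2 k.castSucc) →
      w1 (Fin.last n) < w2 (Fin.last n) → P w1 := by
    rintro w1 hw1 w2 ⟨x2, hx2, hd2⟩ hpre hlt
    refine ⟨x2, hx2, fun k => ?_, ?_⟩
    · have h := hd2 k.castSucc
      exact h.trans (hpre k).symm
    · have hlast : bDigit β x2 n = w2 (Fin.last n) := hd2 (Fin.last n)
      have h1 : (w1 (Fin.last n) : ℝ) + 1 ≤ (w2 (Fin.last n) : ℝ) := by
        have := Int.add_one_le_iff.mpr hlt
        exact_mod_cast this
      have h2 : (w2 (Fin.last n) : ℝ) ≤ β * ((bT β)^[n] x2) := by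
        rw [← hlast]
        exact Int.floor_le _
      linarith
  -- non-P words inject into bWords β n
  have hnotP : ((S.filter (fun w => ¬ P w)).card) ≤ Sn.card := by
    apply Finset.card_le_card_of_injOn (fun w => fun i : Fin n => w i.castSucc)
    · intro w hw
      rw [Finset.mem_coe, Finset.mem_filter] at hw
      obtain ⟨x, hx, hd⟩ := (Set.Finite.mem_toFinset _).mp hw.1
      rw [hSn, Finset.mem_coe, Set.Finite.mem_toFinset]
      exact ⟨x, hx, fun i => hd i.castSucc⟩
    · intro w1 h1 w2 h2 heq
      rw [Finset.coe_filter, Set.mem_setOf_eq] at h1 h2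
      have hw1 : w1 ∈ bWords β (n+1) := (Set.Finite.mem_toFinset _).mp h1.1
      have hw2 : w2 ∈ bWords β (n+1) := (Set.Finite.mem_toFinset _).mp h2.1
      have hpre : ∀ k : Fin n, w1 k.castSucc = w2 k.castSucc := fun k => congrFun heq k
      funext i
      induction i using Fin.lastCases with
      | last =>
          rcases lt_trichotomy (w1 (Fin.last n)) (w2 (Fin.last n)) with h | h | h
          · exact absurd (aux w1 hw1 w2 hw2 hpre h) h1.2
          · exact h
          · exact absurd (aux w2 hw2 w1 hw1 (fun k => (hpre k).symm) h) h2.2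
      | cast j => exact hpre j
  -- key: intervals of P-words are inside their cylinders
  have hkey : ∀ w ∈ S.filter P, ∀ z ∈ Set.Ico (vW β w) (vW β w + (β ^ (n+1))⁻¹),
      z ∈ Set.Ico (0:ℝ) 1 ∧ ∀ i : Fin (n+1), bDigit β z i = w i := by
    intro w hw z hz
    rw [Finset.mem_filter] at hw
    obtain ⟨hwS, x, hx, hpre, hlast⟩ := hw
    have hwW : w ∈ bWords β (n+1) := (Set.Finite.mem_toFinset _).mp hwS
    have hwl0 : (0:ℝ) ≤ (w (Fin.last n) : ℝ) := by
      obtain ⟨x', hx', hd'⟩ := hwW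
      have h9 : bDigit β x' ((Fin.last n : Fin (n+1)) : ℕ) = w (Fin.last n) := hd' _
      have h10 := bDigit_nonneg hβ x' hx' ((Fin.last n : Fin (n+1)) : ℕ)
      rw [h9] at h10
      exact_mod_cast h10
    have hvW : vW β w = bConv β x n + (w (Fin.last n) : ℝ) / β ^ (n+1) := by
      rw [vW, Fin.sum_univ_castSucc]
      congr 1
      rw [← vW_digits (x := x) (n := n), vW]
      exact Finset.sum_congr rfl (fun i _ => by rw [Fin.coe_castSucc, ← hpre i])
    have hβn : (0:ℝ) < β ^ n := pow_pos hβ0 n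
    set t := (z - bConv β x n) * β ^ n with ht_def
    have hzt : bConv β x n + t / β ^ n = z := by field_simp [ht_def]; rw [ht_def]; ring
    have hz1 := hz.1
    have hz2 := hz.2
    rw [hvW] at hz1 hz2
    have hβt : β * t = (z - bConv β x n) * β ^ (n+1) := by rw [ht_def]; ring
    have hbt1 : (w (Fin.last n) : ℝ) ≤ β * t := by
      have h5 : (w (Fin.last n) : ℝ) / β ^ (n+1) ≤ z - bConv β x n := by linarith
      calc (w (Fin.last n) : ℝ) = ((w (Fin.last n) : ℝ) / β ^ (n+1)) * β ^ (n+1) := by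
            field_simp
      _ ≤ (z - bConv β x n) * β ^ (n+1) := mul_le_mul_of_nonneg_right h5 hβn1.le
      _ = β * t := hβt.symm
    have hbt2 : β * t < (w (Fin.last n) : ℝ) + 1 := by
      have h5 : z - bConv β x n < ((w (Fin.last n) : ℝ) + 1) / β ^ (n+1) := by
        rw [add_div]
        have h1B : (β ^ (n+1))⁻¹ = 1 / β ^ (n+1) := (one_div _).symm
        rw [h1B] at hz2
        linarith
      calc β * t = (z - bConv β x n) * β ^ (n+1) := hβt
      _ < (((w (Fin.last n) : ℝ) + 1) / β ^ (n+1)) * β ^ (n+1) :=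
          mul_lt_mul_of_pos_right h5 hβn1
      _ = (w (Fin.last n) : ℝ) + 1 := by field_simp
    have ht0 : 0 ≤ t := by
      have h6 : t = (β * t) / β := by field_simp
      rw [h6]
      exact div_nonneg (hwl0.trans hbt1) hβ0.le
    have htT : t ≤ (bT β)^[n] x := by
      have h7 : β * t < β * ((bT β)^[n] x) := lt_of_lt_of_le hbt2 hlast
      exact le_of_lt ((mul_lt_mul_iff_right₀ hβ0).mp h7)
    obtain ⟨hzmem, hzdig, hziter⟩ := realize hβ n x hx t ht0 htT
    rw [hzt] at hzmem hzdig hziter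
    refine ⟨hzmem, fun i => ?_⟩
    induction i using Fin.lastCases with
    | last =>
        show bDigit β z n = w (Fin.last n)
        rw [bDigit, hziter]
        exact Int.floor_eq_iff.mpr ⟨hbt1, by exact_mod_cast hbt2⟩
    | cast j =>
        show bDigit β z (j : ℕ) = w j.castSucc
        rw [hzdig j j.isLt, hpre j]
  -- measure bound on P-words
  have hPle : ((S.filter P).card : ℝ) ≤ β ^ (n+1) := by
    have hdisj : ((S.filter P : Finset _) : Set (Fin (n+1) → ℤ)).PairwiseDisjoint
        (fun w => Set.Ico (vW β w) (vW β w + (β ^ (n+1))⁻¹)) := by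
      intro w1 h1 w2 h2 hne
      rw [Function.onFun, Set.disjoint_left]
      intro z hz1 hz2
      have d1 := (hkey w1 (by exact_mod_cast h1) z hz1).2
      have d2 := (hkey w2 (by exact_mod_cast h2) z hz2).2
      exact hne (funext fun i => (d1 i).symm.trans (d2 i))
    have hsub : (⋃ w ∈ S.filter P, Set.Ico (vW β w) (vW β w + (β ^ (n+1))⁻¹))
        ⊆ Set.Ico (0:ℝ) 1 := by
      refine Set.iUnion₂_subset (fun w hw z hz => (hkey w hw z hz).1)
    have hmeas : ((S.filter P).card : ℝ≥0∞) * ENNReal.ofReal ((β ^ (n+1))⁻¹) ≤ 1 := by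
      calc ((S.filter P).card : ℝ≥0∞) * ENNReal.ofReal ((β ^ (n+1))⁻¹)
          = ∑ w ∈ S.filter P, volume (Set.Ico (vW β w) (vW β w + (β ^ (n+1))⁻¹)) := by
            rw [Finset.sum_congr rfl (fun w _ => by rw [Real.volume_Ico, add_sub_cancel_left]),
              Finset.sum_const, nsmul_eq_mul]
      _ = volume (⋃ w ∈ S.filter P, Set.Ico (vW β w) (vW β w + (β ^ (n+1))⁻¹)) :=
            (measure_biUnion_finset hdisj (fun w _ => measurableSet_Ico)).symm
      _ ≤ volume (Set.Ico (0:ℝ) 1) := measure_mono hsub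
      _ = 1 := by simp
    have hreal : ((S.filter P).card : ℝ) * (β ^ (n+1))⁻¹ ≤ 1 := by
      have h2 : ((S.filter P).card : ℝ≥0∞) * ENNReal.ofReal ((β ^ (n+1))⁻¹)
          = ENNReal.ofReal ((S.filter P).card * (β ^ (n+1))⁻¹) := by
        rw [ENNReal.ofReal_mul (Nat.cast_nonneg _), ENNReal.ofReal_natCast]
      rw [h2] at hmeas
      exact ENNReal.ofReal_le_one.mp hmeas
    have h4 := mul_le_mul_of_nonneg_left hreal hβn1.le
    rw [mul_one] at h4
    calc ((S.filter P).card : ℝ)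
        = β ^ (n+1) * (((S.filter P).card : ℝ) * (β ^ (n+1))⁻¹) := by field_simp
    _ ≤ β ^ (n+1) := h4
  -- assemble
  have hsplit : S.card = (S.filter P).card + (S.filter (fun w => ¬ P w)).card :=
    (Finset.card_filter_add_card_filter_not (fun w => P w)).symm
  have hcard1 : Nat.card (bWords β (n+1)) = S.card := by
    rw [Nat.card_coe_set_eq, Set.ncard_eq_toFinset_card _ (bWords_finite hβ (n+1))]
  have hcardn : Nat.card (bWords β n) = Sn.card := by
    rw [Nat.card_coe_set_eq, Set.ncard_eq_toFinset_card _ (bWords_finite hβ n)]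
  rw [hcard1, hcardn, hsplit]
  push_cast
  have h8 : ((S.filter (fun w => ¬ P w)).card : ℝ) ≤ (Sn.card : ℝ) := by exact_mod_cast hnotP
  linarith

lemma bWords_zero {β : ℝ} : Nat.card (bWords β 0) = 1 := by
  have h : bWords β 0 = Set.univ := by
    refine Set.eq_univ_of_forall (fun w => ?_)
    exact ⟨0, ⟨le_refl _, one_pos⟩, fun i => i.elim0⟩
  rw [h]
  simp [Nat.card_eq_fintype_card]

lemma bWords_upper {β : ℝ} (hβ : 1 < β) (n : ℕ) :
    (Nat.card (bWords β n) : ℝ) ≤ (β ^ (n+1) - 1) / (β - 1) := by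
  have hβ1 : (0:ℝ) < β - 1 := by linarith
  induction n with
  | zero =>
      rw [bWords_zero]
      rw [pow_one, le_div_iff₀ hβ1]
      norm_num
  | succ m ih =>
      have h1 := bWords_step hβ m
      have h2 : β ^ (m+1) + (β ^ (m+1) - 1) / (β - 1) = (β ^ (m+1+1) - 1) / (β - 1) := by
        field_simp
        ring
      calc (Nat.card (bWords β (m+1)) : ℝ)
          ≤ β ^ (m+1) + (Nat.card (bWords β m) : ℝ) := h1
      _ ≤ β ^ (m+1) + (β ^ (m+1) - 1) / (β - 1) := by linarith
      _ = (β ^ (m+1+1) - 1) / (β - 1) := h2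

theorem stmt0 (β : ℝ) (hβ : 1 < β) (n : ℕ) (hn : 1 ≤ n) :
    β ^ n ≤ (Nat.card {w : Fin n → ℤ |
        ∃ x ∈ Set.Ico (0:ℝ) 1, ∀ i : Fin n, bDigit β x i = w i} : ℝ) ∧
    (Nat.card {w : Fin n → ℤ |
        ∃ x ∈ Set.Ico (0:ℝ) 1, ∀ i : Fin n, bDigit β x i = w i} : ℝ) ≤
      β ^ (n + 1) / (β - 1) := by
  have hβ1 : (0:ℝ) < β - 1 := by linarith
  have heq : {w : Fin n → ℤ |
      ∃ x ∈ Set.Ico (0:ℝ) 1, ∀ i : Fin n, bDigit β x i = w i} = bWords β n := rfl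
  rw [heq]
  refine ⟨bWords_lower hβ n, ?_⟩
  calc (Nat.card (bWords β n) : ℝ) ≤ (β ^ (n+1) - 1) / (β - 1) := bWords_upper hβ n
  _ ≤ β ^ (n+1) / (β - 1) := by
      gcongr
      linarith
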